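/- For every odd n ∈ ℕ, −β_n = β_{n-1} + (a_{n+1}−1)β_n + a_{n+3}β_{n+2} + a_{n+5}β_{n+4} + ⋯. -/

import Mathlib

theorem neg_beta_series_odd (a : ℝ) (ha : Irrational a)
    (aCF : ℕ → ℤ) (ζ : ℕ → ℝ)
    (hζ0 : ζ 0 = a)
    (hfloor : ∀ k, aCF k = ⌊ζ k⌋)
    (hζ : ∀ k, ζ k = (aCF k : ℝ) + 1 / ζ (k + 1))
    (p q : ℕ → ℤ)
    (hq0 : q 0 = 1) (hq1 : q 1 = aCF 1)
    (hqrec : ∀ k, q (k + 2) = aCF (k + 2) * q (k + 1) + q k)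
    (hp0 : p 0 = aCF 0) (hp1 : p 1 = aCF 1 * aCF 0 + 1)
    (hprec : ∀ k, p (k + 2) = aCF (k + 2) * p (k + 1) + p k)
    (β : ℕ → ℝ)
    (hβ : ∀ k, β k = (q k : ℝ) * a - (p k : ℝ)) (n : ℕ) (hn : Odd n) :
    -β n = β (n - 1) + ((aCF (n + 1) : ℝ) - 1) * β n +
      ∑' j : ℕ, (aCF (n + 3 + 2 * j) : ℝ) * β (n + 2 + 2 * j) := by
  -- irrationality of all ζ k
  have hirr : ∀ k, Irrational (ζ k) := by
    intro k
    induction k with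
    | zero => rwa [hζ0]
    | succ k ih =>
      have h1 : Irrational (ζ k - (aCF k : ℝ)) := Irrational.sub_intCast ih _
      have h2 : (ζ (k + 1))⁻¹ = ζ k - (aCF k : ℝ) := by
        rw [hζ k]; ring
      exact Irrational.of_inv (h2 ▸ h1)
  -- fractional parts: 0 < 1/ζ(k+1) < 1
  have hfrac : ∀ k, 0 < 1 / ζ (k + 1) ∧ 1 / ζ (k + 1) < 1 := by
    intro k
    have h2 : 1 / ζ (k + 1) = Int.fract (ζ k) := by
      have := hζ k
      rw [Int.fract, ← hfloor k]; linarith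
    constructor
    · rw [h2]
      rcases lt_or_eq_of_le (Int.fract_nonneg (ζ k)) with h | h
      · exact h
      · exfalso
        have : ζ k = (⌊ζ k⌋ : ℝ) := by
          have := Int.fract_add_floor (ζ k); rw [← h] at this; linarith
        exact (hirr k).ne_int _ this
    · rw [h2]; exact Int.fract_lt_one _
  have hζgt : ∀ k, 1 < ζ (k + 1) := by
    intro k
    obtain ⟨h1, h2⟩ := hfrac k
    have hpos : 0 < ζ (k + 1) := by
      by_contra h
      push_neg at h
      have : 1 / ζ (k + 1) ≤ 0 := one_div_nonpos.mpr h
      linarith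
    rw [div_lt_one hpos] at h2; exact h2
  have hζne : ∀ k, ζ (k + 1) ≠ 0 := fun k => by have := hζgt k; linarith
  -- β recursion
  have hβrec : ∀ k, β (k + 2) = (aCF (k + 2) : ℝ) * β (k + 1) + β k := by
    intro k
    rw [hβ, hβ, hβ, hqrec, hprec]
    push_cast
    ring
  -- β step identity
  have hβstep : ∀ k, β (k + 1) = -β k / ζ (k + 2) := by
    intro k
    induction k with
    | zero =>
      have h0 : β 0 = 1 / ζ 1 := by
        rw [hβ, hq0, hp0]
        have := hζ 0
        rw [hζ0] at this
        push_cast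
        linarith
      have h1 : β 1 = (aCF 1 : ℝ) * β 0 - 1 := by
        rw [hβ, hβ, hq0, hp0, hq1, hp1]
        push_cast
        ring
      rw [h1, h0]
      have hz1 := hζ 1
      have hn1 := hζne 0
      have hn2 : ζ 2 ≠ 0 := hζne 1
      field_simp at hz1
      rw [show (1:ℕ) + 1 = 2 from rfl] at hz1
      field_simp
      rw [show (0:ℕ) + 2 = 2 from rfl]
      linear_combination (-1) * hz1
    | succ k ih =>
      have hrec := hβrec k
      have hk : β k = -β (k + 1) * ζ (k + 2) := by
        rw [ih]
        field_simp
        rw [mul_div_assoc, div_self (hζne (k + 1)), mul_one]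
      have hz := hζ (k + 2)
      rw [show k + 1 + 1 = k + 2 from rfl] at *
      rw [hrec, hk]
      rw [show k + 2 + 1 = k + 3 from rfl]
      have h3 : ζ (k + 3) ≠ 0 := hζne (k + 2)
      rw [show k + 2 + 1 = k + 3 from rfl] at hz
      field_simp at hz
      field_simp
      linear_combination (-β (k + 1)) * hz
  -- decay: |β (k+2)| ≤ |β k| / 2
  have haCF1 : ∀ k, (1 : ℝ) ≤ (aCF (k + 1) : ℝ) := by
    intro k
    have : (1 : ℤ) ≤ ⌊ζ (k + 1)⌋ := Int.le_floor.mpr (by exact_mod_cast (hζgt k).le)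
    rw [hfloor]
    exact_mod_cast this
  have hdecay : ∀ k, |β (k + 2)| ≤ |β k| / 2 := by
    intro k
    have h1 := hβstep k
    have h2 := hβstep (k + 1)
    rw [show k + 1 + 1 = k + 2 from rfl, show k + 1 + 2 = k + 3 from rfl] at h2
    have hβ2 : β (k + 2) = β k / (ζ (k + 2) * ζ (k + 3)) := by
      rw [h2, h1]
      field_simp
    have hprod : 2 ≤ ζ (k + 2) * ζ (k + 3) := by
      have hz := hζ (k + 2)
      have ha1 := haCF1 (k + 1)
      rw [show k + 1 + 1 = k + 2 from rfl] at ha1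
      have h3 : 1 < ζ (k + 3) := hζgt (k + 2)
      have hne := hζne (k + 2)
      have : ζ (k + 2) * ζ (k + 3) = (aCF (k + 2) : ℝ) * ζ (k + 3) + 1 := by
        rw [hz, show k + 2 + 1 = k + 3 from rfl]
        field_simp
      nlinarith
    rw [hβ2, abs_div]
    rw [abs_of_pos (by nlinarith : (0:ℝ) < ζ (k + 2) * ζ (k + 3))]
    rw [div_le_div_iff₀ (by nlinarith) (by norm_num)]
    nlinarith [abs_nonneg (β k)]
  -- geometric bound
  have hgeom : ∀ m j, |β (m + 2 * j)| ≤ |β m| * (1 / 2) ^ j := by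
    intro m j
    induction j with
    | zero => simp
    | succ j ih =>
      have := hdecay (m + 2 * j)
      have he : m + 2 * (j + 1) = m + 2 * j + 2 := by ring
      rw [he]
      calc |β (m + 2 * j + 2)| ≤ |β (m + 2 * j)| / 2 := this
        _ ≤ |β m| * (1 / 2) ^ j / 2 := by linarith
        _ = |β m| * (1 / 2) ^ (j + 1) := by ring
  -- the series terms
  set f : ℕ → ℝ := fun j => (aCF (n + 3 + 2 * j) : ℝ) * β (n + 2 + 2 * j) with hf
  have hfval : ∀ j, f j = β (n + 3 + 2 * j) - β (n + 1 + 2 * j) := by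
    intro j
    have := hβrec (n + 1 + 2 * j)
    rw [show n + 1 + 2 * j + 2 = n + 3 + 2 * j by ring,
        show n + 1 + 2 * j + 1 = n + 2 + 2 * j by ring] at this
    simp only [hf]
    linarith
  -- summability
  have hbound : ∀ j, ‖f j‖ ≤ 2 * |β (n + 1)| * (1 / 2) ^ j := by
    intro j
    rw [Real.norm_eq_abs, hfval j]
    have h1 := hgeom (n + 1) j
    have h2 := hgeom (n + 1) (j + 1)
    rw [show n + 1 + 2 * (j + 1) = n + 3 + 2 * j by ring] at h2
    rw [show n + 1 + 2 * j = n + 1 + 2 * j from rfl] at h1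
    have h3 : |β (n + 3 + 2 * j) - β (n + 1 + 2 * j)| ≤
        |β (n + 3 + 2 * j)| + |β (n + 1 + 2 * j)| := abs_sub _ _
    have h4 : |β (n + 1)| * (1 / 2) ^ (j + 1) ≤ |β (n + 1)| * (1 / 2) ^ j := by
      have : (0:ℝ) ≤ |β (n + 1)| := abs_nonneg _
      have : ((1:ℝ) / 2) ^ (j + 1) ≤ (1 / 2) ^ j := by
        exact pow_le_pow_of_le_one (by norm_num) (by norm_num) (by omega)
      nlinarith [abs_nonneg (β (n + 1))]
    nlinarith
  have hsummable : Summable f := by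
    apply Summable.of_norm_bounded ?_ hbound
    exact (summable_geometric_of_lt_one (by norm_num) (by norm_num)).mul_left _
  -- telescoping partial sums
  have htel : ∀ J, ∑ j ∈ Finset.range J, f j = β (n + 1 + 2 * J) - β (n + 1) := by
    intro J
    induction J with
    | zero => simp
    | succ J ih =>
      rw [Finset.sum_range_succ, ih, hfval J]
      rw [show n + 1 + 2 * (J + 1) = n + 3 + 2 * J by ring]
      ring
  -- limit of β (n+1+2J)
  have hlim : Filter.Tendsto (fun J => β (n + 1 + 2 * J)) Filter.atTop (nhds 0) := by
    apply squeeze_zero_norm (fun J => hgeom (n + 1) J)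
    have : Filter.Tendsto (fun J : ℕ => |β (n + 1)| * (1 / 2) ^ J) Filter.atTop (nhds (|β (n + 1)| * 0)) := by
      exact (tendsto_pow_atTop_nhds_zero_of_lt_one (by norm_num) (by norm_num)).const_mul _
    simpa using this
  -- tsum value
  have htsum : ∑' j, f j = -β (n + 1) := by
    have h1 := hsummable.hasSum.tendsto_sum_nat
    have h2 : Filter.Tendsto (fun J => ∑ j ∈ Finset.range J, f j) Filter.atTop (nhds (-β (n + 1))) := by
      simp only [htel]
      have := hlim.sub_const (β (n + 1))
      simpa using this
    exact tendsto_nhds_unique h1 h2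
  -- assemble
  obtain ⟨m, hm⟩ := hn
  subst hm
  have hrec := hβrec (2 * m)
  rw [show 2 * m + 2 = 2 * m + 1 + 1 from rfl] at hrec
  rw [show 2 * m + 1 - 1 = 2 * m by omega]
  rw [htsum]
  rw [show 2 * m + 1 + 1 = 2 * m + 2 from rfl] at *
  rw [show 2 * m + 1 + 1 = 2 * m + 2 from rfl] at hrec ⊢
  linarith [hrec]
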